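/- arXiv:0905.3703 — 2 statements merged into one kernel-verified Lean document; each statement's English description precedes it below -/
import Mathlib

section
/- Let K and C be compact convex sets in ℝⁿ with C d-decomposable, where 1 ≤ d ≤ n−1. Suppose that for each d-dimensional linear subspace ξ ⊆ ℝⁿ there exists w ∈ ξ such that K_ξ + w ⊆ C_ξ. Then there exists v ∈ ℝⁿ such that K + v ⊆ C. -/
open scoped Pointwise RealInnerProductSpace
noncomputable section

/-- Abbreviation for n-dimensional Euclidean space. -/
abbrev Euc (n : ℕ) := EuclideanSpace ℝ (Fin n)

/-- The translate K + v of a set K by a vector v. -/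
def transl {n : ℕ} (K : Set (Euc n)) (v : Euc n) : Set (Euc n) := (fun x => x + v) '' K

/-- Orthogonal projection of a set onto a subspace ξ, viewed inside the ambient space. -/
def projSet {n : ℕ} (ξ : Submodule ℝ (Euc n)) (K : Set (Euc n)) : Set (Euc n) :=
  (fun x => (ξ.orthogonalProjectionOnto x : Euc n)) '' K

/-- A simplicial family of size m+1: distinct unit vectors spanning an m-dimensional
subspace, some positive combination of which vanishes (the outer unit normals of an
m-dimensional simplex). -/
def SimplicialFamily {n : ℕ} (m : ℕ) (u : Fin (m + 1) → Euc n) : Prop :=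
  Function.Injective u ∧ (∀ i, ‖u i‖ = 1) ∧
    Module.finrank ℝ (Submodule.span ℝ (Set.range u)) = m ∧
    ∃ c : Fin (m + 1) → ℝ, (∀ i, 0 < c i) ∧ ∑ i, c i • u i = 0

/-- L is d-reliable: whenever every projection of L onto a d-dimensional subspace contains
a translate of the corresponding projection of a compact convex set K, L contains a
translate of K. -/
def DReliable {n : ℕ} (d : ℕ) (L : Set (Euc n)) : Prop :=
  ∀ K : Set (Euc n), IsCompact K → Convex ℝ K → K.Nonempty →
    (∀ ξ : Submodule ℝ (Euc n), Module.finrank ℝ ξ = d →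
      ∃ w, transl (projSet ξ K) w ⊆ projSet ξ L) →
    ∃ v, transl K v ⊆ L

/-- x is a regular boundary point of L: exactly one outer unit normal at x. -/
def IsRegularPoint {n : ℕ} (L : Set (Euc n)) (x : Euc n) : Prop :=
  x ∈ frontier L ∧ ∃! u : Euc n, ‖u‖ = 1 ∧ ∀ y ∈ L, ⟪y - x, u⟫ ≤ 0

/-- u is the (unique) outer unit normal to L at the regular boundary point x. -/
def IsNormalAtRegularPoint {n : ℕ} (L : Set (Euc n)) (x u : Euc n) : Prop :=
  x ∈ frontier L ∧ ‖u‖ = 1 ∧ (∀ y ∈ L, ⟪y - x, u⟫ ≤ 0) ∧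
    ∀ w : Euc n, ‖w‖ = 1 → (∀ y ∈ L, ⟪y - x, w⟫ ≤ 0) → w = u

/-- The support set of P in direction u. -/
def supportSet {n : ℕ} (P : Set (Euc n)) (u : Euc n) : Set (Euc n) :=
  {x ∈ P | ∀ y ∈ P, ⟪y, u⟫ ≤ ⟪x, u⟫}

/-- u is an outer unit facet normal of P: the support set of P in direction u is a face of
codimension 1 in the affine hull of P. -/
def IsFacetNormal {n : ℕ} (P : Set (Euc n)) (u : Euc n) : Prop :=
  ‖u‖ = 1 ∧ Module.finrank ℝ (vectorSpan ℝ (supportSet P u)) + 1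
      = Module.finrank ℝ (vectorSpan ℝ P)

/-- S is a k-dimensional simplex: the convex hull of k+1 affinely independent points. -/
def IsSimplexOfDim {n : ℕ} (k : ℕ) (S : Set (Euc n)) : Prop :=
  ∃ p : Fin (k + 1) → Euc n, AffineIndependent ℝ p ∧ S = convexHull ℝ (Set.range p)

/-- C is d-decomposable: a direct Minkowski sum of at least two nonempty compact convex
sets lying in complementary subspaces of dimension at most d. -/
def DDecomposable {n : ℕ} (d : ℕ) (C : Set (Euc n)) : Prop :=
  ∃ (m : ℕ) (ξ : Fin m → Submodule ℝ (Euc n)) (Cs : Fin m → Set (Euc n)),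
    2 ≤ m ∧ iSupIndep ξ ∧ (⨆ i, ξ i) = ⊤ ∧
    (∀ i, Module.finrank ℝ (ξ i) ≤ d) ∧
    (∀ i, (Cs i).Nonempty ∧ IsCompact (Cs i) ∧ Convex ℝ (Cs i) ∧ Cs i ⊆ (ξ i : Set (Euc n))) ∧
    C = ∑ i, Cs i

/-- C is a d-decomposable orthogonal simplex product: a direct Minkowski sum of simplices of
dimension at most d lying in mutually orthogonal complementary subspaces of dimension at
most d. -/
def OrthSimplexProduct {n : ℕ} (d : ℕ) (C : Set (Euc n)) : Prop :=
  ∃ (m : ℕ) (ξ : Fin m → Submodule ℝ (Euc n)) (Cs : Fin m → Set (Euc n)),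
    2 ≤ m ∧ iSupIndep ξ ∧ (⨆ i, ξ i) = ⊤ ∧
    (∀ i, Module.finrank ℝ (ξ i) ≤ d) ∧
    (∀ i j, i ≠ j → ∀ x ∈ ξ i, ∀ y ∈ ξ j, ⟪x, y⟫ = 0) ∧
    (∀ i, Cs i ⊆ (ξ i : Set (Euc n)) ∧ ∃ k ≤ d, IsSimplexOfDim k (Cs i)) ∧
    C = ∑ i, Cs i


section Aux

open Module Submodule

theorem exists_ge_finrank_eq' {F E : Type*} [Field F] [AddCommGroup E] [Module F E]
    [FiniteDimensional F E] (k : ℕ) (hk : k ≤ finrank F E) :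
    ∀ (j : ℕ) (W : Submodule F E), finrank F W + j = k →
      ∃ W', W ≤ W' ∧ finrank F W' = k := by
  intro j
  induction j with
  | zero => exact fun W h => ⟨W, le_rfl, by simpa using h⟩
  | succ j ih =>
    intro W h
    have hlt : finrank F W < finrank F E := by omega
    obtain ⟨x, hx⟩ := Submodule.exists_of_finrank_lt W hlt
    have hx0 : x ≠ 0 := fun h0 => hx 1 one_ne_zero (by simp [h0])
    have hinf : W ⊓ (F ∙ x) = ⊥ := by
      rw [eq_bot_iff]
      intro y hy
      obtain ⟨hyW, hym⟩ := Submodule.mem_inf.mp hy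
      obtain ⟨c, rfl⟩ := Submodule.mem_span_singleton.mp hym
      rcases eq_or_ne c 0 with rfl | hc
      · simp
      · exact absurd hyW (hx c hc)
    have hr : finrank F ↥(W ⊔ F ∙ x) = finrank F W + 1 := by
      have h2 := Submodule.finrank_sup_add_finrank_inf_eq W (F ∙ x)
      rw [hinf, finrank_bot, finrank_span_singleton hx0] at h2
      omega
    obtain ⟨W', hle, hfrW⟩ := ih (W ⊔ F ∙ x) (by omega)
    exact ⟨W', le_trans le_sup_left hle, hfrW⟩

end Aux

/-- If every projection of K onto a d-dimensional subspace can be translated into the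
corresponding projection of a d-decomposable set C, then K can be translated into C. -/
theorem decomposable_implies_reliable {n d : ℕ} (hd1 : 1 ≤ d) (hdn : d ≤ n - 1)
    (K C : Set (Euc n))
    (hKc : IsCompact K) (hKv : Convex ℝ K) (hKne : K.Nonempty)
    (hCc : IsCompact C) (hCv : Convex ℝ C) (hC : DDecomposable d C)
    (hcover : ∀ ξ : Submodule ℝ (Euc n), Module.finrank ℝ ξ = d →
      ∃ w ∈ ξ, transl (projSet ξ K) w ⊆ projSet ξ C) :
    ∃ v, transl K v ⊆ C := by
  classical
  obtain ⟨m, ξ, Cs, hm, hindep, hsup, hdim, hCs, hCeq⟩ := hC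
  have hnE : Module.finrank ℝ (Euc n) = n := finrank_euclideanSpace_fin
  set S : Fin m → Submodule ℝ (Euc n) := fun i => ⨆ j, ⨆ _ : j ≠ i, ξ j with hS
  set η : Fin m → Submodule ℝ (Euc n) := fun i => (S i)ᗮ with hη
  have hdisj : ∀ i, Disjoint (ξ i) (S i) := hindep
  have hST : ∀ i, ξ i ⊔ S i = ⊤ := by
    intro i
    refine le_antisymm le_top ?_
    rw [← hsup]
    refine iSup_le fun j => ?_
    rcases eq_or_ne j i with rfl | hj
    · exact le_sup_left
    · exact le_trans (le_iSup₂ (f := fun j (_ : j ≠ i) => ξ j) j hj) le_sup_right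
  have hξle : ∀ i j, j ≠ i → ξ j ≤ (η i)ᗮ := fun i j hj =>
    le_trans (le_iSup₂ (f := fun j (_ : j ≠ i) => ξ j) j hj) (S i).le_orthogonal_orthogonal
  have hfr : ∀ i, Module.finrank ℝ (η i) = Module.finrank ℝ (ξ i) := by
    intro i
    have h1 := Submodule.finrank_sup_add_finrank_inf_eq (ξ i) (S i)
    rw [hST i, disjoint_iff.mp (hdisj i), finrank_bot, finrank_top] at h1
    have h2 : Module.finrank ℝ (S i) + Module.finrank ℝ (η i) = Module.finrank ℝ (Euc n) :=
      Submodule.finrank_add_finrank_orthogonal (S i)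
    omega
  have hinj : ∀ i, ∀ a ∈ ξ i, ∀ b ∈ ξ i,
      (η i).orthogonalProjectionOnto a = (η i).orthogonalProjectionOnto b → a = b := by
    intro i a ha b hb hab
    have h0 : (η i).orthogonalProjectionOnto (a - b) = 0 := by rw [map_sub, hab, sub_self]
    have hmem : a - b ∈ (η i)ᗮ := Submodule.orthogonalProjectionOnto_eq_zero_iff.mp h0
    have hmem' : a - b ∈ S i := by
      rw [hη] at hmem
      rwa [Submodule.orthogonal_orthogonal] at hmem
    have := (hdisj i).le_bot (Submodule.mem_inf.mpr ⟨Submodule.sub_mem _ ha hb, hmem'⟩)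
    rw [Submodule.mem_bot] at this
    exact sub_eq_zero.mp this
  have hsurj : ∀ i (y : ↥(η i)), ∃ vi ∈ ξ i,
      (η i).orthogonalProjectionOnto vi = y := by
    intro i y
    let φ : ↥(ξ i) →ₗ[ℝ] ↥(η i) :=
      ((η i).orthogonalProjectionOnto).toLinearMap.comp (ξ i).subtype
    have hφinj : Function.Injective φ := by
      intro a b hab
      exact Subtype.ext (hinj i a a.2 b b.2 hab)
    have hφsurj : Function.Surjective φ :=
      (LinearMap.injective_iff_surjective_of_finrank_eq_finrank (by rw [hfr i])).mp hφinj
    obtain ⟨a, ha⟩ := hφsurj y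
    exact ⟨a, a.2, ha⟩
  have hext : ∀ i, ∃ Ξ : Submodule ℝ (Euc n), η i ≤ Ξ ∧ Module.finrank ℝ Ξ = d := by
    intro i
    have h1 : Module.finrank ℝ (η i) ≤ d := by rw [hfr i]; exact hdim i
    have h2 : d ≤ Module.finrank ℝ (Euc n) := by rw [hnE]; omega
    exact exists_ge_finrank_eq' d h2 (d - Module.finrank ℝ (η i)) (η i) (by omega)
  choose Ξ hΞle hΞd using hext
  choose w hwmem hwsub using fun i => hcover (Ξ i) (hΞd i)
  have key : ∀ i, ∀ x ∈ K, ∃ c ∈ C,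
      (η i).orthogonalProjectionOnto x + (η i).orthogonalProjectionOnto (w i)
        = (η i).orthogonalProjectionOnto c := by
    intro i x hx
    have hx' : (↑((Ξ i).orthogonalProjectionOnto x) : Euc n) + w i ∈ projSet (Ξ i) C :=
      hwsub i (Set.mem_image_of_mem _ (Set.mem_image_of_mem _ hx))
    obtain ⟨c, hc, hce⟩ := hx'
    refine ⟨c, hc, ?_⟩
    have h3 := congrArg ((η i).orthogonalProjectionOnto) hce
    beta_reduce at h3
    rw [map_add, ← Submodule.starProjection_apply,
        Submodule.orthogonalProjectionOnto_starProjection_of_le (hΞle i),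
        ← Submodule.starProjection_apply,
        Submodule.orthogonalProjectionOnto_starProjection_of_le (hΞle i)] at h3
    exact h3.symm
  choose v hvmem hvproj using fun i => hsurj i ((η i).orthogonalProjectionOnto (w i))
  refine ⟨∑ i, v i, ?_⟩
  rintro y ⟨x, hx, rfl⟩
  have hxtop : x ∈ ⨆ i, ξ i := by rw [hsup]; trivial
  obtain ⟨f, hf, hfsum⟩ := (Submodule.mem_iSup_iff_exists_finsupp ξ x).mp hxtop
  have hxsum : ∑ i, f i = x := by
    rw [← hfsum]; exact (Finsupp.sum_fintype f (fun _ xi => xi) (fun _ => rfl)).symm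
  have hzero : ∀ i j a, a ∈ ξ j → j ≠ i → (η i).orthogonalProjectionOnto a = 0 :=
    fun i j a ha hj =>
      Submodule.orthogonalProjectionOnto_apply_of_mem_orthogonal (hξle i j hj ha)
  have hstep : ∀ i, f i + v i ∈ Cs i := by
    intro i
    obtain ⟨c, hc, hkey⟩ := key i x hx
    rw [hCeq] at hc
    obtain ⟨g, hg, hgsum⟩ := (Set.mem_fintype_sum _ c).mp hc
    have hpx : (η i).orthogonalProjectionOnto x = (η i).orthogonalProjectionOnto (f i) := by
      conv_lhs => rw [← hxsum]
      rw [map_sum]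
      exact Finset.sum_eq_single i (fun j _ hj => hzero i j (f j) (hf j) hj)
        (fun h => absurd (Finset.mem_univ i) h)
    have hpc : (η i).orthogonalProjectionOnto c = (η i).orthogonalProjectionOnto (g i) := by
      conv_lhs => rw [← hgsum]
      rw [map_sum]
      exact Finset.sum_eq_single i (fun j _ hj => hzero i j (g j) ((hCs j).2.2.2 (hg j)) hj)
        (fun h => absurd (Finset.mem_univ i) h)
    have heq : (η i).orthogonalProjectionOnto (f i + v i) = (η i).orthogonalProjectionOnto (g i) := by
      rw [map_add, hvproj i, ← hpx, hkey, hpc]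
    have := hinj i _ (Submodule.add_mem _ (hf i) (hvmem i)) _ ((hCs i).2.2.2 (hg i)) heq
    rw [this]
    exact hg i
  have hsum2 : x + ∑ i, v i = ∑ i, (f i + v i) := by
    rw [Finset.sum_add_distrib, hxsum]
  show x + ∑ i, v i ∈ C
  rw [hCeq, hsum2]
  exact (Set.mem_fintype_sum _ _).mpr ⟨fun i => f i + v i, hstep, rfl⟩
end
end

section
/- Let A be a set of unit vectors in ℝⁿ with A = −A (symmetric under reflection through the origin), containing no simplicial family of size 4 or greater, and suppose the origin lies in the interior of the convex hull of A. Then there exists a direct sum decomposition ℝⁿ = W₁ ⊕ ⋯ ⊕ W_k into subspaces with dim W_i ≤ 2 for each i, such that A ⊆ W₁ ∪ ⋯ ∪ W_k. -/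
open scoped Pointwise RealInnerProductSpace
noncomputable section

namespace NS4

open Submodule Set

variable {n : ℕ}

lemma smul_cancel {t : ℝ} (ht : t ≠ 0) {z w : Euc n} (h : t • z = w) : z = t⁻¹ • w := by
  rw [← h, smul_smul, inv_mul_cancel₀ ht, one_smul]

lemma flip_span {u v : Euc n} (hu : u ≠ 0) (h : u ∈ span ℝ ({v} : Set (Euc n))) :
    v ∈ span ℝ ({u} : Set (Euc n)) := by
  rw [mem_span_singleton] at h ⊢
  obtain ⟨t, rfl⟩ := h
  have ht : t ≠ 0 := by rintro rfl; simp at hu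
  exact ⟨t⁻¹, by rw [smul_smul, inv_mul_cancel₀ ht, one_smul]⟩

lemma indep_iff (F : Finset (Euc n)) :
    LinearIndependent ℝ ((↑) : ↥(F : Set (Euc n)) → Euc n) ↔
      ∀ c : Euc n → ℝ, ∑ x ∈ F, c x • x = 0 → ∀ x ∈ F, c x = 0 := by
  classical
  rw [Fintype.linearIndependent_iff]
  constructor
  · intro h c hc x hx
    exact h (fun i => c ↑i) (by rw [← hc]; exact Finset.sum_finset_coe (fun x => c x • x) F)
      ⟨x, by simpa using hx⟩
  · intro h g hg i
    have hsum : ∑ x ∈ F, (if hx : x ∈ F then g ⟨x, by simpa using hx⟩ else 0) • x = 0 := by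
      rw [← Finset.sum_finset_coe (fun x => (if hx : x ∈ F then g ⟨x, by simpa using hx⟩ else 0) • x) F]
      rw [← hg]
      refine Finset.sum_congr rfl ?_
      intro j _
      have hj : (j : Euc n) ∈ F := by simpa using j.2
      simp only [dif_pos hj]
    have := h _ hsum i (by simpa using i.2)
    simpa using this

lemma comb3 {a b c : Euc n} (h : LinearIndependent ℝ ![a, b, c]) (p q r : ℝ)
    (hsum : p • a + q • b + r • c = 0) : p = 0 ∧ q = 0 ∧ r = 0 := by
  rw [Fintype.linearIndependent_iff] at h
  have := h ![p, q, r] (by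
    rw [Fin.sum_univ_three]
    simpa using hsum)
  refine ⟨by simpa using this 0, by simpa using this 1, by simpa using this 2⟩


variable {A : Set (Euc n)}

/-- The key forbidden-configuration lemma: a dependence with all-nonzero coefficients among
m+1 ≥ 4 pairwise non-collinear members of A spanning an m-dimensional space is impossible. -/
lemma forb (hunit : ∀ u ∈ A, ‖u‖ = 1) (hsymm : A = -A)
    (hnosimp : ∀ (k : ℕ) (v : Fin (k + 1) → Euc n), 3 ≤ k →
      (∀ i, v i ∈ A) → ¬ SimplicialFamily k v)
    (m : ℕ) (hm : 3 ≤ m) (f : Fin (m + 1) → Euc n) (hfA : ∀ i, f i ∈ A)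
    (hlines : ∀ i j, i ≠ j → f i ∉ span ℝ ({f j} : Set (Euc n)))
    (c : Fin (m + 1) → ℝ) (hc : ∀ i, c i ≠ 0)
    (hsum : ∑ i, c i • f i = 0)
    (hrank : Module.finrank ℝ (span ℝ (Set.range f)) = m) : False := by
  classical
  have hnegA : ∀ x ∈ A, -x ∈ A := by
    intro x hx
    rw [hsymm]
    simpa using hx
  set g : Fin (m + 1) → Euc n := fun i => if 0 < c i then f i else -f i with hg
  have hgA : ∀ i, g i ∈ A := by
    intro i
    simp only [hg]
    split_ifs
    · exact hfA i
    · exact hnegA _ (hfA i)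
  have hspan : ∀ i, g i ∈ span ℝ ({f i} : Set (Euc n)) := by
    intro i
    simp only [hg]
    split_ifs
    · exact mem_span_singleton_self _
    · exact neg_mem (mem_span_singleton_self _)
  have hginj : Function.Injective g := by
    intro i j hij
    by_contra hne
    apply hlines i j hne
    have : f i = g i ∨ f i = -g i := by
      simp only [hg]; split_ifs
      · exact Or.inl rfl
      · exact Or.inr (by simp)
    rcases this with h1 | h1 <;> rw [h1, hij]
    · exact hspan j
    · exact neg_mem (hspan j)
  have hsumeq : ∀ i, |c i| • g i = c i • f i := by
    intro i
    by_cases h : 0 < c i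
    · simp only [hg, if_pos h, abs_of_pos h]
    · have hneg : c i < 0 := lt_of_le_of_ne (not_lt.1 h) (hc i)
      simp only [hg, if_neg h, abs_of_neg hneg, neg_smul, smul_neg, neg_neg]
  have hspaneq : span ℝ (Set.range g) = span ℝ (Set.range f) := by
    apply le_antisymm
    · rw [span_le]
      rintro x ⟨i, rfl⟩
      exact span_mono (by simp [Set.singleton_subset_iff, Set.mem_range_self]) (hspan i)
    · rw [span_le]
      rintro x ⟨i, rfl⟩
      have : f i = g i ∨ f i = -g i := by
        simp only [hg]; split_ifs
        · exact Or.inl rfl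
        · exact Or.inr (by simp)
      rcases this with h1 | h1 <;> rw [h1]
      · exact subset_span ⟨i, rfl⟩
      · exact neg_mem (subset_span ⟨i, rfl⟩)
  refine hnosimp m g hm hgA ⟨hginj, fun i => hunit _ (hgA i), by rw [hspaneq]; exact hrank,
    fun i => |c i|, fun i => abs_pos.2 (hc i), ?_⟩
  rw [Finset.sum_congr rfl (fun i _ => hsumeq i)]
  exact hsum


set_option maxHeartbeats 1000000 in
lemma trans3 (hunit : ∀ u ∈ A, ‖u‖ = 1) (hsymm : A = -A)
    (hnosimp : ∀ (k : ℕ) (v : Fin (k + 1) → Euc n), 3 ≤ k →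
      (∀ i, v i ∈ A) → ¬ SimplicialFamily k v)
    {a b c x y : Euc n} (ha : a ∈ A) (hb : b ∈ A) (hc : c ∈ A) (hx : x ∈ A) (hy : y ∈ A)
    (hind : LinearIndependent ℝ ![a, b, c])
    (hx1 : x ∈ span ℝ ({a, b} : Set (Euc n))) (hx2 : x ∉ span ℝ ({a} : Set (Euc n)))
    (hx3 : x ∉ span ℝ ({b} : Set (Euc n)))
    (hy1 : y ∈ span ℝ ({b, c} : Set (Euc n))) (hy2 : y ∉ span ℝ ({b} : Set (Euc n)))
    (hy3 : y ∉ span ℝ ({c} : Set (Euc n))) : False := by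
  classical
  have hne : ∀ z ∈ A, z ≠ 0 := by
    intro z hz h0
    have := hunit z hz
    rw [h0] at this
    simp at this
  obtain ⟨p, q, hpq⟩ := mem_span_pair.1 hx1
  obtain ⟨r, s, hrs⟩ := mem_span_pair.1 hy1
  have hp : p ≠ 0 := by
    rintro rfl
    exact hx3 (mem_span_singleton.2 ⟨q, by rw [← hpq, zero_smul, zero_add]⟩)
  have hq : q ≠ 0 := by
    rintro rfl
    exact hx2 (mem_span_singleton.2 ⟨p, by rw [← hpq, zero_smul, add_zero]⟩)
  have hr : r ≠ 0 := by
    rintro rfl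
    exact hy3 (mem_span_singleton.2 ⟨s, by rw [← hrs, zero_smul, zero_add]⟩)
  have hs : s ≠ 0 := by
    rintro rfl
    exact hy2 (mem_span_singleton.2 ⟨r, by rw [← hrs, zero_smul, add_zero]⟩)
  -- the key dependence
  have key : r • x + (-(r * p)) • a + (-q) • y + (q * s) • c = 0 := by
    rw [← hpq, ← hrs]
    module
  -- non-collinearity facts
  have nxy : x ∉ span ℝ ({y} : Set (Euc n)) := by
    intro h
    obtain ⟨t, ht⟩ := mem_span_singleton.1 h
    have h0 : p • a + (q - t * r) • b + (-(t * s)) • c = 0 := by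
      have h1 : p • a + q • b = t • (r • b + s • c) := by rw [hpq, hrs, ht]
      linear_combination (norm := module) h1
    exact hp (comb3 hind _ _ _ h0).1
  have nxc : x ∉ span ℝ ({c} : Set (Euc n)) := by
    intro h
    obtain ⟨t, ht⟩ := mem_span_singleton.1 h
    have h0 : p • a + q • b + (-t) • c = 0 := by
      have h1 : p • a + q • b = t • c := by rw [hpq, ht]
      linear_combination (norm := module) h1
    exact hp (comb3 hind _ _ _ h0).1
  have nay : a ∉ span ℝ ({y} : Set (Euc n)) := by
    intro h
    obtain ⟨t, ht⟩ := mem_span_singleton.1 h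
    have h0 : (1 : ℝ) • a + (-(t * r)) • b + (-(t * s)) • c = 0 := by
      have h1 : (1 : ℝ) • a = t • (r • b + s • c) := by rw [hrs, ht, one_smul]
      linear_combination (norm := module) h1
    exact one_ne_zero (comb3 hind _ _ _ h0).1
  have nac : a ∉ span ℝ ({c} : Set (Euc n)) := by
    intro h
    obtain ⟨t, ht⟩ := mem_span_singleton.1 h
    have h0 : (1 : ℝ) • a + (0 : ℝ) • b + (-t) • c = 0 := by
      have h1 : (1 : ℝ) • a = t • c := by rw [ht, one_smul]
      linear_combination (norm := module) h1
    exact one_ne_zero (comb3 hind _ _ _ h0).1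
  have hx0 : x ≠ 0 := hne x hx
  have ha0 : a ≠ 0 := hne a ha
  have hy0 : y ≠ 0 := hne y hy
  have hc0 : c ≠ 0 := hne c hc
  -- apply forb to ![x, a, y, c]
  apply forb hunit hsymm hnosimp 3 le_rfl ![x, a, y, c]
    (by intro i; fin_cases i <;> assumption)
    ?_ ![r, -(r * p), -q, q * s]
    (by intro i; fin_cases i <;> simp [hp, hq, hr, hs, mul_ne_zero] )
    (by rw [Fin.sum_univ_four]; simpa using key)
    ?_
  · -- hlines
    intro i j hij
    fin_cases i <;> fin_cases j
    · exact absurd rfl hij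
    · exact hx2
    · exact nxy
    · exact nxc
    · exact fun h => hx2 (flip_span ha0 h)
    · exact absurd rfl hij
    · exact nay
    · exact nac
    · exact fun h => nxy (flip_span hy0 h)
    · exact fun h => nay (flip_span hy0 h)
    · exact absurd rfl hij
    · exact hy3
    · exact fun h => nxc (flip_span hc0 h)
    · exact fun h => nac (flip_span hc0 h)
    · exact fun h => hy3 (flip_span hc0 h)
    · exact absurd rfl hij
  · -- rank
    have hb' : b ∈ span ℝ ({x, a} : Set (Euc n)) := by
      rw [mem_span_pair]
      refine ⟨q⁻¹, -(q⁻¹ * p), ?_⟩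
      have : q • b = x - p • a := by rw [← hpq]; module
      have hbq := smul_cancel hq this
      rw [hbq]; module
    have hrange : Set.range ![x, a, y, c] = {x, a, y, c} := by
      ext z
      simp [Matrix.range_cons, Matrix.range_empty]
      tauto
    have hspaneq : span ℝ ({x, a, y, c} : Set (Euc n)) = span ℝ (Set.range ![a, b, c]) := by
      have hrange3 : Set.range ![a, b, c] = {a, b, c} := by
        ext z
        simp [Matrix.range_cons, Matrix.range_empty]
        tauto
      rw [hrange3]
      apply le_antisymm
      · rw [span_le]
        rintro z hz
        simp only [Set.mem_insert_iff, Set.mem_singleton_iff] at hz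
        rcases hz with rfl | rfl | rfl | rfl
        · exact span_mono (by intro w hw; simp at hw; rcases hw with rfl | rfl <;> simp) hx1
        · exact subset_span (by simp)
        · exact span_mono (by intro w hw; simp at hw; rcases hw with rfl | rfl <;> simp) hy1
        · exact subset_span (by simp)
      · rw [span_le]
        rintro z hz
        simp only [Set.mem_insert_iff, Set.mem_singleton_iff] at hz
        rcases hz with rfl | rfl | rfl
        · exact subset_span (by simp)
        · exact span_mono (by intro w hw; simp at hw; rcases hw with rfl | rfl <;> simp) hb'
        · exact subset_span (by simp)
    rw [hrange, hspaneq, finrank_span_eq_card hind]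
    simp

/-- Two members of A are related if they are collinear, or if the plane they span contains a
third direction of A. -/
def Rel (A : Set (Euc n)) (u v : Euc n) : Prop :=
  v ∈ span ℝ ({u} : Set (Euc n)) ∨
    ∃ w ∈ A, w ∈ span ℝ ({u, v} : Set (Euc n)) ∧
      w ∉ span ℝ ({u} : Set (Euc n)) ∧ w ∉ span ℝ ({v} : Set (Euc n))

variable {A : Set (Euc n)}

lemma rel_refl (u : Euc n) : Rel A u u := Or.inl (mem_span_singleton_self u)

lemma rel_symm {u v : Euc n} (hu : u ≠ 0) (hv : v ≠ 0) (h : Rel A u v) : Rel A v u := by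
  rcases h with h | ⟨w, hwA, hw1, hw2, hw3⟩
  · exact Or.inl (flip_span hv h)
  · exact Or.inr ⟨w, hwA, by rwa [Set.pair_comm], hw3, hw2⟩

lemma rel_chain_indep_false (hunit : ∀ u ∈ A, ‖u‖ = 1) (hsymm : A = -A)
    (hnosimp : ∀ (k : ℕ) (v : Fin (k + 1) → Euc n), 3 ≤ k →
      (∀ i, v i ∈ A) → ¬ SimplicialFamily k v)
    {a b c : Euc n} (ha : a ∈ A) (hb : b ∈ A) (hc : c ∈ A)
    (hind : LinearIndependent ℝ ![a, b, c]) (h1 : Rel A a b) (h2 : Rel A b c) : False := by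
  rcases h1 with h1 | ⟨x, hxA, hx1, hx2, hx3⟩
  · obtain ⟨t, ht⟩ := mem_span_singleton.1 h1
    have h0 : t • a + (-1 : ℝ) • b + (0 : ℝ) • c = 0 := by
      linear_combination (norm := module) ht
    exact absurd (comb3 hind _ _ _ h0).2.1 (by norm_num)
  rcases h2 with h2 | ⟨y, hyA, hy1, hy2, hy3⟩
  · obtain ⟨t, ht⟩ := mem_span_singleton.1 h2
    have h0 : (0 : ℝ) • a + t • b + (-1 : ℝ) • c = 0 := by
      linear_combination (norm := module) ht
    exact absurd (comb3 hind _ _ _ h0).2.2 (by norm_num)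
  exact trans3 hunit hsymm hnosimp ha hb hc hxA hyA hind hx1 hx2 hx3 hy1 hy2 hy3

lemma rel_trans (hunit : ∀ u ∈ A, ‖u‖ = 1) (hsymm : A = -A)
    (hnosimp : ∀ (k : ℕ) (v : Fin (k + 1) → Euc n), 3 ≤ k →
      (∀ i, v i ∈ A) → ¬ SimplicialFamily k v)
    {u v w : Euc n} (hu : u ∈ A) (hv : v ∈ A) (hw : w ∈ A)
    (h1 : Rel A u v) (h2 : Rel A v w) : Rel A u w := by
  have hne : ∀ z ∈ A, z ≠ 0 := by
    intro z hz h0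
    have := hunit z hz
    rw [h0] at this
    simp at this
  have hu0 := hne u hu
  have hv0 := hne v hv
  have hw0 := hne w hw
  by_cases hwu : w ∈ span ℝ ({u} : Set (Euc n))
  · exact Or.inl hwu
  by_cases hvu : v ∈ span ℝ ({u} : Set (Euc n))
  · -- v collinear with u
    rcases h2 with h2 | ⟨y, hyA, hy1, hy2, hy3⟩
    · exact absurd (span_le.2 (Set.singleton_subset_iff.2 hvu) h2) hwu
    · refine Or.inr ⟨y, hyA, ?_, ?_, hy3⟩
      · refine span_le.2 ?_ hy1
        intro z hz
        rcases hz with rfl | rfl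
        · exact SetLike.mem_coe.2 (span_mono (by simp) hvu)
        · exact SetLike.mem_coe.2 (subset_span (by simp))
      · intro hyu
        exact hy2 (span_le.2 (Set.singleton_subset_iff.2 (flip_span hv0 hvu)) hyu)
  by_cases hwv : w ∈ span ℝ ({v} : Set (Euc n))
  · -- w collinear with v
    rcases h1 with h1 | ⟨x, hxA, hx1, hx2, hx3⟩
    · exact absurd h1 hvu
    · refine Or.inr ⟨x, hxA, ?_, hx2, ?_⟩
      · refine span_le.2 ?_ hx1
        intro z hz
        rcases hz with rfl | rfl
        · exact SetLike.mem_coe.2 (subset_span (by simp))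
        · exact SetLike.mem_coe.2 (span_mono (by simp) (flip_span hw0 hwv))
      · intro hxw
        exact hx3 (span_le.2 (Set.singleton_subset_iff.2 hwv) hxw)
  -- now u, v and v, w are genuinely non-collinear
  by_cases hind : LinearIndependent ℝ ![u, v, w]
  · exact absurd (rel_chain_indep_false hunit hsymm hnosimp hu hv hw hind h1 h2) (by simp)
  · -- w lies in the plane of u and v
    obtain ⟨g, hg0, i0, hgi0⟩ := Fintype.not_linearIndependent_iff.1 hind
    rw [Fin.sum_univ_three] at hg0
    simp only [Matrix.cons_val_zero, Matrix.cons_val_one, Matrix.head_cons,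
      Matrix.cons_val_two, Matrix.tail_cons] at hg0
    have hg2 : g 2 ≠ 0 := by
      intro h2'
      rw [h2', zero_smul, add_zero] at hg0
      by_cases hg1 : g 1 = 0
      · rw [hg1, zero_smul, add_zero] at hg0
        have hg00 : g 0 ≠ 0 := by
          fin_cases i0
          · simpa using hgi0
          · exact absurd hg1 (by simpa using hgi0)
          · exact absurd h2' (by simpa using hgi0)
        exact hu0 (by
          have := smul_cancel hg00 hg0
          simpa using this)
      · apply hvu
        rw [mem_span_singleton]
        refine ⟨-((g 1)⁻¹ * g 0), ?_⟩
        have : g 1 • v = -(g 0 • u) := by linear_combination (norm := module) hg0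
        have h3 := smul_cancel hg1 this
        rw [h3]; module
    have hw' : w = (-(( g 2)⁻¹ * g 0)) • u + (-((g 2)⁻¹ * g 1)) • v := by
      have h1' : g 2 • w = -(g 0 • u) - g 1 • v := by linear_combination (norm := module) hg0
      have h2'' := smul_cancel hg2 h1'
      rw [h2'']; module
    set β : ℝ := -((g 2)⁻¹ * g 1) with hβ
    have hβ0 : β ≠ 0 := by
      intro h
      apply hwu
      rw [mem_span_singleton]
      exact ⟨-((g 2)⁻¹ * g 0), by rw [hw', h, zero_smul, add_zero]⟩
    refine Or.inr ⟨v, hv, ?_, hvu, ?_⟩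
    · rw [mem_span_pair]
      refine ⟨-(β⁻¹ * (-((g 2)⁻¹ * g 0))), β⁻¹, ?_⟩
      have hβv : β • v = w - (-((g 2)⁻¹ * g 0)) • u := by rw [hw']; module
      have := smul_cancel hβ0 hβv
      rw [this]; module
    · intro hvw
      exact hwv (flip_span hv0 hvw)


/-- Concrete linear dependence of a finite set of vectors. -/
def DepF (M : Finset (Euc n)) : Prop :=
  ∃ c : Euc n → ℝ, ∑ x ∈ M, c x • x = 0 ∧ ∃ x ∈ M, c x ≠ 0

lemma exists_minimal_dep (F : Finset (Euc n)) :
    DepF F → ∃ M, M ⊆ F ∧ DepF M ∧ ∀ M' ⊂ M, ¬ DepF M' := by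
  classical
  induction F using Finset.strongInduction with
  | _ F ih =>
    intro h
    by_cases hmin : ∀ M' ⊂ F, ¬ DepF M'
    · exact ⟨F, Finset.Subset.refl F, h, hmin⟩
    · push_neg at hmin
      obtain ⟨M', hM'F, hM'⟩ := hmin
      obtain ⟨M, hMM', hd, hm⟩ := ih M' hM'F hM'
      exact ⟨M, hMM'.trans hM'F.subset, hd, hm⟩

variable {A : Set (Euc n)}

lemma circuit_rel (hunit : ∀ u ∈ A, ‖u‖ = 1) (hsymm : A = -A)
    (hnosimp : ∀ (k : ℕ) (v : Fin (k + 1) → Euc n), 3 ≤ k →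
      (∀ i, v i ∈ A) → ¬ SimplicialFamily k v)
    (M : Finset (Euc n)) (hMA : ↑M ⊆ A)
    (hdep : DepF M) (hmin : ∀ M' ⊂ M, ¬ DepF M') :
    (∀ a ∈ M, ∀ b ∈ M, Rel A a b) ∧
      ∀ a ∈ M, a ∈ span ℝ ((↑M : Set (Euc n)) \ {a}) := by
  classical
  have hne : ∀ z ∈ A, z ≠ 0 := by
    intro z hz h0
    have := hunit z hz
    rw [h0] at this
    simp at this
  have hMne : ∀ z ∈ M, z ≠ 0 := fun z hz => hne z (hMA hz)
  obtain ⟨c, hcsum, x0, hx0M, hx0⟩ := hdep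
  -- all coefficients are nonzero
  have hcall : ∀ x ∈ M, c x ≠ 0 := by
    by_contra hcon
    push_neg at hcon
    obtain ⟨z, hzM, hz⟩ := hcon
    have hfil : M.filter (fun x => c x ≠ 0) ⊂ M := by
      refine Finset.ssubset_iff_subset_ne.2 ⟨Finset.filter_subset _ _, fun h => ?_⟩
      have : z ∈ M.filter (fun x => c x ≠ 0) := by rw [h]; exact hzM
      exact (Finset.mem_filter.1 this).2 hz
    refine hmin _ hfil ⟨c, ?_, x0, Finset.mem_filter.2 ⟨hx0M, hx0⟩, hx0⟩
    rw [Finset.sum_filter_of_ne]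
    · exact hcsum
    · intro x _ hfx hcx
      exact hfx (by rw [hcx, zero_smul])
  have hspanErase : ∀ a ∈ M, a ∈ span ℝ (↑(M.erase a) : Set (Euc n)) := by
    intro a haM
    have h1 : c a • a + ∑ x ∈ M.erase a, c x • x = 0 := by
      rw [Finset.add_sum_erase M (fun x => c x • x) haM]; exact hcsum
    have h2 : c a • a = -∑ x ∈ M.erase a, c x • x := eq_neg_of_add_eq_zero_left h1
    have h3 := smul_cancel (hcall a haM) h2
    have hmem : -∑ x ∈ M.erase a, c x • x ∈ span ℝ (↑(M.erase a) : Set (Euc n)) := by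
      refine Submodule.neg_mem _ (Submodule.sum_mem _ ?_)
      intro x hx
      exact Submodule.smul_mem _ _ (subset_span (Finset.mem_coe.2 hx))
    have hmem2 := Submodule.smul_mem (span ℝ (↑(M.erase a) : Set (Euc n))) (c a)⁻¹ hmem
    rw [← h3] at hmem2
    exact hmem2
  have hnoncol : 3 ≤ M.card → ∀ p ∈ M, ∀ q ∈ M, p ≠ q →
      p ∉ span ℝ ({q} : Set (Euc n)) := by
    intro h3 p hp q hq hpq hmem
    obtain ⟨s, hs⟩ := mem_span_singleton.1 hmem
    have hsub : ({p, q} : Finset (Euc n)) ⊂ M := by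
      refine Finset.ssubset_iff_subset_ne.2 ⟨?_, ?_⟩
      · intro z hz
        rcases Finset.mem_insert.1 hz with rfl | hz'
        · exact hp
        · rw [Finset.mem_singleton.1 hz']; exact hq
      · intro h
        have h2 : ({p, q} : Finset (Euc n)).card = 2 := Finset.card_pair hpq
        rw [h] at h2
        omega
    refine hmin _ hsub ⟨fun z => if z = p then -1 else s, ?_, p, Finset.mem_insert_self _ _,
      by simp⟩
    rw [Finset.sum_pair hpq]
    simp only [if_pos rfl, if_neg (Ne.symm hpq)]
    rw [hs]
    simp
  refine ⟨?_, fun a ha => by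
    rw [← Finset.coe_erase]
    exact hspanErase a ha⟩
  rcases lt_or_ge M.card 4 with hlt | hge
  · -- small circuits: collinear pair or coplanar triple
    have hcard : M.card = 1 ∨ M.card = 2 ∨ M.card = 3 := by
      have : 1 ≤ M.card := Finset.card_pos.2 ⟨x0, hx0M⟩
      omega
    rcases hcard with h1 | h2 | h3
    · exfalso
      obtain ⟨a, rfl⟩ := Finset.card_eq_one.1 h1
      have ha : c a • a = 0 := by simpa using hcsum
      rcases smul_eq_zero.1 ha with h | h
      · exact hcall a (Finset.mem_singleton_self a) h
      · exact hMne a (Finset.mem_singleton_self a) h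
    · obtain ⟨a, b, hab, rfl⟩ := Finset.card_eq_two.1 h2
      have haM : a ∈ ({a, b} : Finset (Euc n)) := by simp
      have hbM : b ∈ ({a, b} : Finset (Euc n)) := by simp
      have hsum2 : c a • a + c b • b = 0 := by rwa [Finset.sum_pair hab] at hcsum
      have hba : b ∈ span ℝ ({a} : Set (Euc n)) := by
        rw [mem_span_singleton]
        refine ⟨-((c b)⁻¹ * c a), ?_⟩
        have h2' : c b • b = -(c a • a) := by linear_combination (norm := module) hsum2
        have h3' := smul_cancel (hcall b hbM) h2'
        conv_rhs => rw [h3']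
        module
      have hrab : Rel A a b := Or.inl hba
      have hrba : Rel A b a := rel_symm (hMne a haM) (hMne b hbM) hrab
      intro p hp q hq
      rcases Finset.mem_insert.1 hp with rfl | hp'
      · rcases Finset.mem_insert.1 hq with rfl | hq'
        · exact rel_refl _
        · obtain rfl := Finset.mem_singleton.1 hq'
          exact hrab
      · obtain rfl := Finset.mem_singleton.1 hp'
        rcases Finset.mem_insert.1 hq with rfl | hq'
        · exact hrba
        · obtain rfl := Finset.mem_singleton.1 hq'
          exact rel_refl _
    · have hnc := hnoncol (by omega)
      have key : ∀ p ∈ M, ∀ q ∈ M, ∀ r ∈ M, p ≠ q → r ≠ p → r ≠ q → Rel A p q := by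
        intro p hp q hq r hr hpq hrp hrq
        have hM3 : ({p, q, r} : Finset (Euc n)) = M := by
          apply Finset.eq_of_subset_of_card_le
          · intro z hz
            rcases Finset.mem_insert.1 hz with rfl | hz'
            · exact hp
            rcases Finset.mem_insert.1 hz' with rfl | hz''
            · exact hq
            · rw [Finset.mem_singleton.1 hz'']; exact hr
          · rw [h3]
            have : ({p, q, r} : Finset (Euc n)).card = 3 :=
              Finset.card_eq_three.2 ⟨p, q, r, hpq, Ne.symm hrp, Ne.symm hrq, rfl⟩
            omega
        have herase : M.erase r = {p, q} := by
          rw [← hM3]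
          ext z
          simp only [Finset.mem_erase, Finset.mem_insert, Finset.mem_singleton]
          constructor
          · rintro ⟨hzr, rfl | rfl | rfl⟩
            · exact Or.inl rfl
            · exact Or.inr rfl
            · exact absurd rfl hzr
          · rintro (rfl | rfl)
            · exact ⟨Ne.symm hrp, Or.inl rfl⟩
            · exact ⟨Ne.symm hrq, Or.inr (Or.inl rfl)⟩
        have hrspan := hspanErase r hr
        rw [herase] at hrspan
        have hrpq : r ∈ span ℝ ({p, q} : Set (Euc n)) := by
          simpa using hrspan
        exact Or.inr ⟨r, hMA (Finset.mem_coe.2 hr), hrpq,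
          hnc r hr p hp hrp, hnc r hr q hq hrq⟩
      intro p hp q hq
      by_cases hpq : p = q
      · subst hpq; exact rel_refl _
      · have hex : ∃ r ∈ M, r ≠ p ∧ r ≠ q := by
          by_contra hcon
          push_neg at hcon
          have hsub : M ⊆ {p, q} := by
            intro z hz
            rcases eq_or_ne z p with rfl | hzp
            · exact Finset.mem_insert_self _ _
            · rw [hcon z hz hzp]
              exact Finset.mem_insert.2 (Or.inr (Finset.mem_singleton_self q))
          have hle := Finset.card_le_card hsub
          have h2 : ({p, q} : Finset (Euc n)).card = 2 := Finset.card_pair hpq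
          omega
        obtain ⟨r, hr, hrp, hrq⟩ := hex
        exact key p hp q hq r hr hpq hrp hrq
  · -- big circuits are impossible
    exfalso
    have hnc := hnoncol (by omega)
    set m := M.card - 1 with hmdef
    have hm1 : M.card = m + 1 := by omega
    have hm3 : 3 ≤ m := by omega
    have e : Fin (m + 1) ≃ {x // x ∈ M} := (finCongr hm1.symm).trans M.equivFin.symm
    have hfM : ∀ i, (↑(e i) : Euc n) ∈ M := fun i => (e i).2
    have hfInj : Function.Injective (fun i => (↑(e i) : Euc n)) := fun i j hij =>
      e.injective (Subtype.ext hij)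
    have hsumf : ∑ i, c ↑(e i) • (↑(e i) : Euc n) = 0 := by
      rw [Equiv.sum_comp e (fun b => c ↑b • (↑b : Euc n)),
        Finset.sum_coe_sort M (fun x => c x • x)]
      exact hcsum
    have hrangef : Set.range (fun i => (↑(e i) : Euc n)) = (↑M : Set (Euc n)) := by
      ext z
      constructor
      · rintro ⟨i, rfl⟩
        exact Finset.mem_coe.2 (e i).2
      · intro hz
        exact ⟨e.symm ⟨z, hz⟩, by simp⟩
    have hindepErase : LinearIndependent ℝ ((↑) : ↥(M.erase x0) → Euc n) := by
      have h := (indep_iff (M.erase x0)).2 (by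
        intro c' hc' z hz
        by_contra hz0
        exact hmin _ (Finset.erase_ssubset hx0M) ⟨c', hc', z, hz, hz0⟩)
      exact h
    have hrank : Module.finrank ℝ (span ℝ (Set.range (fun i => (↑(e i) : Euc n)))) = m := by
      rw [hrangef]
      have hins : (↑M : Set (Euc n)) = insert x0 (↑(M.erase x0) : Set (Euc n)) := by
        rw [← Finset.coe_insert, Finset.insert_erase hx0M]
      rw [hins, span_insert_eq_span (hspanErase x0 hx0M),
        finrank_span_finset_eq_card hindepErase, Finset.card_erase_of_mem hx0M]
    exact forb hunit hsymm hnosimp m hm3 _ (fun i => hMA (Finset.mem_coe.2 (hfM i)))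
      (fun i j hij => hnc _ (hfM i) _ (hfM j) (hfInj.ne hij))
      (fun i => c ↑(e i)) (fun i => hcall _ (hfM i)) hsumf hrank

end NS4

open NS4 Submodule Set in
/-- If a centrally symmetric set A of unit vectors contains no simplicial family of size 4
or greater, and the origin lies in the interior of the convex hull of A, then ℝⁿ decomposes
as a direct sum of subspaces W₁, …, W_k of dimension at most 2 with
A ⊆ W₁ ∪ ⋯ ∪ W_k. -/
theorem no_simplicial_four_decomposition {n : ℕ} (A : Set (Euc n))
    (hunit : ∀ u ∈ A, ‖u‖ = 1) (hsymm : A = -A)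
    (hnosimp : ∀ (k : ℕ) (v : Fin (k + 1) → Euc n), 3 ≤ k →
      (∀ i, v i ∈ A) → ¬ SimplicialFamily k v)
    (hint : (0 : Euc n) ∈ interior (convexHull ℝ A)) :
    ∃ (k : ℕ) (W : Fin k → Submodule ℝ (Euc n)),
      iSupIndep W ∧ (⨆ i, W i) = ⊤ ∧ (∀ i, Module.finrank ℝ (W i) ≤ 2) ∧
      A ⊆ ⋃ i, (W i : Set (Euc n)) := by

  classical
  have hne : ∀ z ∈ A, z ≠ 0 := by
    intro z hz h0
    have := hunit z hz
    rw [h0] at this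
    simp at this
  have hspanA : span ℝ A = ⊤ := by
    apply Submodule.eq_top_of_nonempty_interior'
    refine ⟨0, interior_mono ?_ hint⟩
    exact convexHull_min Submodule.subset_span (span ℝ A).convex
  obtain ⟨B, hBA, hBspan, hBli⟩ := exists_linearIndependent ℝ A
  have hBfin : B.Finite := hBli.setFinite
  haveI : Finite ↥B := hBfin
  let S : Setoid ↥B := ⟨fun x y => Rel A ↑x ↑y,
    ⟨fun x => rel_refl _, fun {x y} h => rel_symm (hne _ (hBA x.2)) (hne _ (hBA y.2)) h,
     fun {x y z} h1 h2 => rel_trans hunit hsymm hnosimp (hBA x.2) (hBA y.2) (hBA z.2) h1 h2⟩⟩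
  haveI : Fintype (Quotient S) := Fintype.ofFinite _
  set k := Fintype.card (Quotient S) with hk
  let e : Quotient S ≃ Fin k := Fintype.equivFin _
  let piece : Fin k → Set ↥B := fun i => {b | Quotient.mk S b = e.symm i}
  let W : Fin k → Submodule ℝ (Euc n) := fun i => span ℝ (Subtype.val '' piece i)
  have hpieceUnion : (⋃ i, piece i) = Set.univ := by
    ext b
    simp only [Set.mem_iUnion, Set.mem_univ, iff_true]
    exact ⟨e (Quotient.mk S b), (e.symm_apply_apply _).symm⟩
  refine ⟨k, W, ?_, ?_, ?_, ?_⟩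
  · -- independence
    rw [iSupIndep_def]
    intro i
    have hsup : (⨆ (j) (_ : j ≠ i), W j)
        = span ℝ (Subtype.val '' ⋃ (j) (_ : j ≠ i), piece j) := by
      rw [Set.image_iUnion₂, Submodule.span_iUnion₂]
    rw [hsup]
    show Disjoint (span ℝ (Subtype.val '' piece i)) _
    refine hBli.disjoint_span_image ?_
    rw [Set.disjoint_left]
    intro b hb hb'
    simp only [Set.mem_iUnion] at hb'
    obtain ⟨j, hji, hbj⟩ := hb'
    exact hji (e.symm.injective ((hbj : Quotient.mk S b = e.symm j).symm.trans hb))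
  · -- spanning
    have h1 : (⨆ i, W i) = span ℝ (Subtype.val '' ⋃ i, piece i) := by
      rw [Set.image_iUnion, span_iUnion]
    rw [h1, hpieceUnion, Set.image_univ, Subtype.range_coe, hBspan, hspanA]
  · -- dimension bound
    intro i
    by_cases h3 : ∃ x ∈ piece i, ∃ y ∈ piece i, ∃ z ∈ piece i, x ≠ y ∧ x ≠ z ∧ y ≠ z
    · exfalso
      obtain ⟨x, hx, y, hy, z, hz, hxy, hxz, hyz⟩ := h3
      have hrel1 : Rel A ↑x ↑y :=
        Quotient.exact ((hx : Quotient.mk S x = e.symm i).trans (hy : _).symm)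
      have hrel2 : Rel A ↑y ↑z :=
        Quotient.exact ((hy : Quotient.mk S y = e.symm i).trans (hz : _).symm)
      have hinj : Function.Injective ![x, y, z] := by
        intro a b hab
        fin_cases a <;> fin_cases b
        · rfl
        · exact absurd hab hxy
        · exact absurd hab hxz
        · exact absurd hab (Ne.symm hxy)
        · rfl
        · exact absurd hab hyz
        · exact absurd hab (Ne.symm hxz)
        · exact absurd hab (Ne.symm hyz)
        · rfl
      have hind : LinearIndependent ℝ ![(↑x : Euc n), ↑y, ↑z] := by
        have h := hBli.comp ![x, y, z] hinj
        have heq : ((↑) : ↥B → Euc n) ∘ ![x, y, z] = ![(↑x : Euc n), ↑y, ↑z] := by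
          funext j
          fin_cases j <;> rfl
        rwa [heq] at h
      exact rel_chain_indep_false hunit hsymm hnosimp (hBA x.2) (hBA y.2) (hBA z.2)
        hind hrel1 hrel2
    · push_neg at h3
      obtain ⟨u, v, hsub⟩ : ∃ u v : Euc n, Subtype.val '' piece i ⊆ {u, v} := by
        rcases Set.eq_empty_or_nonempty (piece i) with hemp | ⟨x, hx⟩
        · exact ⟨0, 0, by simp [hemp]⟩
        by_cases hone : ∀ y ∈ piece i, y = x
        · refine ⟨↑x, ↑x, ?_⟩
          rintro z ⟨b, hb, rfl⟩
          simp [hone b hb]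
        · push_neg at hone
          obtain ⟨y, hy, hyx⟩ := hone
          refine ⟨↑x, ↑y, ?_⟩
          rintro z ⟨b, hb, rfl⟩
          rcases eq_or_ne b x with rfl | hbx
          · exact Set.mem_insert _ _
          · rcases eq_or_ne b y with rfl | hby
            · exact Set.mem_insert_iff.2 (Or.inr rfl)
            · exact absurd (h3 x hx y hy b hb (Ne.symm hyx) (Ne.symm hbx)).symm hby
      have hle1 : Module.finrank ℝ (W i) ≤ Module.finrank ℝ (span ℝ ({u, v} : Set (Euc n))) :=
        Submodule.finrank_mono (span_mono hsub)
      refine hle1.trans ?_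
      have hrg : ({u, v} : Set (Euc n)) = Set.range ![u, v] := by
        ext z
        simp [Matrix.range_cons, Matrix.range_empty]
        tauto
      rw [hrg]
      have h2 := finrank_range_le_card (R := ℝ) ![u, v]
      simpa [Set.finrank] using h2
  · -- covering
    intro v0 hv0A
    by_cases hv0B : v0 ∈ B
    · refine Set.mem_iUnion.2 ⟨e (Quotient.mk S ⟨v0, hv0B⟩), ?_⟩
      exact subset_span ⟨⟨v0, hv0B⟩, (e.symm_apply_apply _).symm, rfl⟩
    · have hv0span : v0 ∈ span ℝ B := by
        rw [hBspan]
        exact subset_span hv0A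
      obtain ⟨T, hTB, hv0T⟩ := mem_span_finite_of_mem_span hv0span
      have hv0nT : v0 ∉ T := fun h => hv0B (hTB (Finset.mem_coe.2 h))
      obtain ⟨fT, hfT⟩ := mem_span_finset.1 hv0T
      have hdep : DepF (insert v0 T) := by
        refine ⟨fun z => if z = v0 then -1 else fT z, ?_, v0, Finset.mem_insert_self _ _,
          by simp⟩
        rw [Finset.sum_insert hv0nT]
        have hT' : ∑ x ∈ T, (if x = v0 then (-1 : ℝ) else fT x) • x = ∑ x ∈ T, fT x • x := by
          refine Finset.sum_congr rfl fun x hx => ?_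
          rw [if_neg (by rintro rfl; exact hv0nT hx)]
        rw [hT', hfT.2]
        simp
      obtain ⟨M, hMsub, hMdep, hMmin⟩ := exists_minimal_dep _ hdep
      have hMA : (↑M : Set (Euc n)) ⊆ A := by
        intro z hz
        rcases Finset.mem_insert.1 (hMsub hz) with rfl | hzT
        · exact hv0A
        · exact hBA (hTB hzT)
      have hv0M : v0 ∈ M := by
        by_contra hcon
        have hMB : (↑M : Set (Euc n)) ⊆ B := by
          intro z hz
          rcases Finset.mem_insert.1 (hMsub hz) with rfl | hzT
          · exact absurd hz hcon
          · exact hTB hzT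
        obtain ⟨c, hcs, z, hzM, hz0⟩ := hMdep
        exact hz0 ((indep_iff M).1 (LinearIndepOn.mono (show LinearIndepOn ℝ id B from hBli) hMB) c hcs z hzM)
      obtain ⟨hpair, hspanE⟩ := circuit_rel hunit hsymm hnosimp M hMA hMdep hMmin
      have hv0sp := hspanE v0 hv0M
      have hMBx : (↑M : Set (Euc n)) \ {v0} ⊆ B := by
        rintro z ⟨hzM, hzv⟩
        rcases Finset.mem_insert.1 (hMsub hzM) with rfl | hzT
        · exact absurd rfl hzv
        · exact hTB hzT
      have hEne : ((↑M : Set (Euc n)) \ {v0}).Nonempty := by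
        rcases Set.eq_empty_or_nonempty ((↑M : Set (Euc n)) \ {v0}) with hemp | h
        · exfalso
          rw [hemp] at hv0sp
          rw [span_empty, Submodule.mem_bot] at hv0sp
          exact hne v0 hv0A hv0sp
        · exact h
      obtain ⟨b0, hb0M, hb0v⟩ := hEne
      have hb0B : b0 ∈ B := hMBx ⟨hb0M, hb0v⟩
      refine Set.mem_iUnion.2 ⟨e (Quotient.mk S ⟨b0, hb0B⟩), ?_⟩
      have hsubpiece : (↑M : Set (Euc n)) \ {v0}
          ⊆ Subtype.val '' piece (e (Quotient.mk S ⟨b0, hb0B⟩)) := by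
        rintro z ⟨hzM, hzv⟩
        have hzB : z ∈ B := hMBx ⟨hzM, hzv⟩
        refine ⟨⟨z, hzB⟩, ?_, rfl⟩
        show Quotient.mk S ⟨z, hzB⟩ = e.symm (e (Quotient.mk S ⟨b0, hb0B⟩))
        rw [Equiv.symm_apply_apply]
        exact Quotient.sound (hpair z hzM b0 hb0M)
      exact SetLike.mem_coe.2 (span_mono hsubpiece hv0sp)
end
end
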